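/- Let R be a commutative ring, z ∈ R, n ≥ 1, and let S : Matrix (Fin n) (Fin n) R satisfy z ∣ S i j whenever (j:ℕ) ≤ (i:ℕ) (all entries on and below the diagonal are divisible by z). Then z² divides det S − (−1)^{n+1} · (S (n−1) 0) · ∏_{i=0}^{n−2} S i (i+1). In particular, z² divides det S if and only if z² divides (S (n−1) 0) · ∏_{i=0}^{n−2} S i (i+1). -/
import Mathlib

open Finset Equiv

lemma aux_cycle {m : ℕ} (σ : Equiv.Perm (Fin (m+1))) (hσ : σ ≠ (finRotate (m+1)).symm) :
    ∃ i j : Fin (m+1), i ≠ j ∧ (i:ℕ) ≤ σ i ∧ (j:ℕ) ≤ σ j := by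
  by_contra hcon
  push_neg at hcon
  set i₀ : Fin (m+1) := σ.symm (Fin.last m) with hi₀
  have h₀ : (i₀ : ℕ) ≤ σ i₀ := by
    rw [hi₀, Equiv.apply_symm_apply]
    exact Fin.le_last _
  have hlt : ∀ i : Fin (m+1), i ≠ i₀ → (σ i : ℕ) + 1 ≤ i := by
    intro i hi
    by_contra h
    push_neg at h
    exact absurd (hcon i i₀ hi (by omega)) (by omega)
  have hsum : ∑ i : Fin (m+1), ((σ i : ℕ)) = ∑ i : Fin (m+1), (i : ℕ) :=
    Equiv.sum_comp σ (fun i => (i:ℕ))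
  have hsplit1 : (σ i₀ : ℕ) + ∑ i ∈ univ.erase i₀, ((σ i : ℕ)) = ∑ i : Fin (m+1), ((σ i : ℕ)) :=
    Finset.add_sum_erase univ (fun i => ((σ i : ℕ))) (mem_univ i₀)
  have hsplit2 : (i₀ : ℕ) + ∑ i ∈ univ.erase i₀, ((i : ℕ)) = ∑ i : Fin (m+1), (i : ℕ) :=
    Finset.add_sum_erase univ (fun i : Fin (m+1) => (i : ℕ)) (mem_univ i₀)
  have hle : ∀ i ∈ univ.erase i₀, (σ i : ℕ) + 1 ≤ (i : ℕ) := by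
    intro i hi
    exact hlt i (Finset.ne_of_mem_erase hi)
  have hsumle : ∑ i ∈ univ.erase i₀, ((σ i : ℕ) + 1) ≤ ∑ i ∈ univ.erase i₀, ((i : ℕ)) :=
    Finset.sum_le_sum hle
  have hcard : (univ.erase i₀).card = m := by
    simp [Finset.card_erase_of_mem]
  have hdist : ∑ i ∈ univ.erase i₀, ((σ i : ℕ) + 1)
      = (∑ i ∈ univ.erase i₀, ((σ i : ℕ))) + m := by
    rw [Finset.sum_add_distrib, Finset.sum_const, hcard, smul_eq_mul, mul_one]
  have hσi₀ : (σ i₀ : ℕ) ≤ m := by omega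
  have hvi₀ : (i₀ : ℕ) = 0 ∧ (σ i₀ : ℕ) = m := by omega
  have heq : ∑ i ∈ univ.erase i₀, ((σ i : ℕ) + 1) = ∑ i ∈ univ.erase i₀, ((i : ℕ)) := by omega
  have hforall := (Finset.sum_eq_sum_iff_of_le hle).mp heq
  apply hσ
  refine Equiv.ext fun i => ?_
  have : finRotate (m+1) (σ i) = i := by
    rw [finRotate_succ_apply]
    by_cases hi : i = i₀
    · subst hi
      have h1 : σ i₀ = Fin.last m := Fin.ext hvi₀.2
      rw [h1]
      have : Fin.last m + 1 = 0 := by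
        apply Fin.ext
        rw [Fin.val_add_one]
        simp
      rw [this]
      exact (Fin.ext hvi₀.1).symm
    · have h1 := hforall i (Finset.mem_erase.mpr ⟨hi, mem_univ _⟩)
      apply Fin.ext
      rw [Fin.val_add_one]
      split
      · next h => 
        exfalso
        rw [h] at h1
        simp [Fin.val_last] at h1
        omega
      · exact h1
  calc σ i = (finRotate (m+1)).symm (finRotate (m+1) (σ i)) := (Equiv.symm_apply_apply _ _).symm
    _ = (finRotate (m+1)).symm i := by rw [this]

lemma aux_sq_dvd {R : Type*} [CommRing R] {z : R} {ι : Type*} {s : Finset ι} {f : ι → R}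
    {i j : ι} (hij : i ≠ j) (hi : i ∈ s) (hj : j ∈ s) (di : z ∣ f i) (dj : z ∣ f j) :
    z ^ 2 ∣ ∏ x ∈ s, f x := by
  classical
  have hj' : j ∈ s.erase i := Finset.mem_erase.mpr ⟨Ne.symm hij, hj⟩
  rw [← Finset.mul_prod_erase s f hi, ← Finset.mul_prod_erase _ f hj', pow_two]
  exact mul_dvd_mul di (dj.mul_right _)

theorem stmt_19 {R : Type*} [CommRing R] (z : R) {n : ℕ} (hn : 1 ≤ n)
    (S : Matrix (Fin n) (Fin n) R)
    (hS : ∀ i j : Fin n, (j : ℕ) ≤ (i : ℕ) → z ∣ S i j) :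
    z ^ 2 ∣ S.det - (-1) ^ (n + 1) * S ⟨n - 1, by omega⟩ ⟨0, by omega⟩ *
        ∏ i : Fin (n - 1), S ⟨i.1, by have := i.isLt; omega⟩ ⟨i.1 + 1, by have := i.isLt; omega⟩ ∧
    (z ^ 2 ∣ S.det ↔
      z ^ 2 ∣ S ⟨n - 1, by omega⟩ ⟨0, by omega⟩ *
        ∏ i : Fin (n - 1), S ⟨i.1, by have := i.isLt; omega⟩ ⟨i.1 + 1, by have := i.isLt; omega⟩) := by
  obtain ⟨m, rfl⟩ : ∃ m, n = m + 1 := ⟨n - 1, by omega⟩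
  set σ₀ : Equiv.Perm (Fin (m+1)) := (finRotate (m+1)).symm with hσ₀def
  -- pointwise description of σ₀
  have h0 : σ₀ 0 = Fin.last m := by
    rw [hσ₀def, Equiv.symm_apply_eq, finRotate_succ_apply]
    apply Fin.ext
    rw [Fin.val_add_one]
    simp
  have hsucc : ∀ i : Fin m, σ₀ i.succ = i.castSucc := by
    intro i
    rw [hσ₀def, Equiv.symm_apply_eq, finRotate_succ_apply]
    apply Fin.ext
    rw [Fin.val_add_one]
    have him := i.isLt
    split
    · next h =>
      exfalso
      have := congrArg Fin.val h
      simp [Fin.val_last] at this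
      omega
    · simp
  -- every other permutation contributes a term divisible by z^2
  have hother : ∀ σ ∈ univ.erase σ₀, z ^ 2 ∣ Equiv.Perm.sign σ • ∏ i, S (σ i) i := by
    intro σ hσ
    obtain ⟨i, j, hij, hi, hj⟩ := aux_cycle σ (Finset.ne_of_mem_erase hσ)
    have hp : z ^ 2 ∣ ∏ i, S (σ i) i :=
      aux_sq_dvd hij (mem_univ i) (mem_univ j) (hS _ _ hi) (hS _ _ hj)
    rcases Int.units_eq_one_or (Equiv.Perm.sign σ) with h | h <;>
      simp [Units.smul_def, h, hp, dvd_neg]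
  have hsum : z ^ 2 ∣ ∑ σ ∈ univ.erase σ₀, Equiv.Perm.sign σ • ∏ i, S (σ i) i :=
    Finset.dvd_sum hother
  -- the main term
  have hprod : ∏ i, S (σ₀ i) i
      = S ⟨m + 1 - 1, by omega⟩ ⟨0, by omega⟩ *
        ∏ i : Fin (m + 1 - 1), S ⟨i.1, by have := i.isLt; omega⟩
          ⟨i.1 + 1, by have := i.isLt; omega⟩ := by
    rw [Fin.prod_univ_succ, h0]
    refine congrArg₂ (· * ·) ?_ (Finset.prod_congr rfl fun i _ => ?_)
    · exact congrArg₂ S (Fin.ext (by simp)) (Fin.ext (by simp))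
    · rw [hsucc]
      exact congrArg₂ S (Fin.ext (by simp)) (Fin.ext (by simp))
  have hsign : Equiv.Perm.sign σ₀ = (-1 : ℤˣ) ^ (m + 1 + 1) := by
    rw [hσ₀def, Equiv.Perm.sign_symm, sign_finRotate, pow_succ, pow_succ]
    simp
  have hterm : Equiv.Perm.sign σ₀ • ∏ i, S (σ₀ i) i
      = (-1) ^ (m + 1 + 1) * S ⟨m + 1 - 1, by omega⟩ ⟨0, by omega⟩ *
        ∏ i : Fin (m + 1 - 1), S ⟨i.1, by have := i.isLt; omega⟩
          ⟨i.1 + 1, by have := i.isLt; omega⟩ := by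
    rw [hsign, hprod, Units.smul_def, zsmul_eq_mul]
    push_cast
    ring
  have hdet : S.det = Equiv.Perm.sign σ₀ • (∏ i, S (σ₀ i) i)
      + ∑ σ ∈ univ.erase σ₀, Equiv.Perm.sign σ • ∏ i, S (σ i) i := by
    rw [Matrix.det_apply]
    exact (Finset.add_sum_erase _ _ (mem_univ σ₀)).symm
  have hfirst : z ^ 2 ∣ S.det - (-1) ^ (m + 1 + 1) * S ⟨m + 1 - 1, by omega⟩ ⟨0, by omega⟩ *
      ∏ i : Fin (m + 1 - 1), S ⟨i.1, by have := i.isLt; omega⟩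
        ⟨i.1 + 1, by have := i.isLt; omega⟩ := by
    rw [hdet, hterm]
    simpa using hsum
  refine ⟨hfirst, ?_⟩
  have hu : IsUnit ((-1 : R) ^ (m + 1 + 1)) := (isUnit_one.neg).pow _
  constructor
  · intro h
    have h2 := dvd_sub h hfirst
    simp only [sub_sub_cancel] at h2
    rw [mul_assoc] at h2
    exact hu.dvd_mul_left.mp h2
  · intro h
    have h2 : z ^ 2 ∣ (-1) ^ (m + 1 + 1) * S ⟨m + 1 - 1, by omega⟩ ⟨0, by omega⟩ *
        ∏ i : Fin (m + 1 - 1), S ⟨i.1, by have := i.isLt; omega⟩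
          ⟨i.1 + 1, by have := i.isLt; omega⟩ := by
      rw [mul_assoc]
      exact hu.dvd_mul_left.mpr h
    have := dvd_add hfirst h2
    simpa using this
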